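/- Let Φ ∈ Mat(n×n,ℂ), n ≥ 2, with distinct eigenvalues λ_1,…,λ_m, and let Θ_Φ = (λ_1 I − Φ)·…·(λ_m I − Φ). Then for every integer k with 1 ≤ k ≤ n−1, rank((Θ_Φ)^k) = n − n·m + rank((λ_1 I − Φ)^k) + … + rank((λ_m I − Φ)^k). -/

import Mathlib

open Polynomial LinearMap

/-- The set of (distinct) eigenvalues of a complex matrix. -/
noncomputable def eigFinset {n : ℕ} (Φ : Matrix (Fin n) (Fin n) ℂ) : Finset ℂ :=
  (Matrix.charpoly Φ).roots.toFinset

/-- `Θ_Φ = (λ₁I − Φ)·…·(λ_mI − Φ)`, the product over the distinct eigenvalues of `Φ`. -/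
noncomputable def thetaMat {n : ℕ} (Φ : Matrix (Fin n) (Fin n) ℂ) : Matrix (Fin n) (Fin n) ℂ :=
  Polynomial.aeval Φ (∏ μ ∈ eigFinset Φ, (Polynomial.C μ - Polynomial.X))

/-- Nullity of `aeval f` of a product of pairwise coprime powers `(C μ - X)^k` is additive. -/
lemma ker_aeval_prod_finrank {N : ℕ} (f : (Fin N → ℂ) →ₗ[ℂ] (Fin N → ℂ)) (k : ℕ)
    (s : Finset ℂ) :
    Module.finrank ℂ (ker (aeval f (∏ μ ∈ s, (C μ - X) ^ k))) =
      ∑ μ ∈ s, Module.finrank ℂ (ker (aeval f ((C μ - X) ^ k))) := by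
  classical
  induction s using Finset.induction_on with
  | empty => rw [Finset.sum_empty, Submodule.finrank_eq_zero]; simp [Module.End.one_eq_id]
  | @insert a s ha ih =>
    have hcop : IsCoprime ((C a - X) ^ k) (∏ μ ∈ s, (C μ - X) ^ k) := by
      apply IsCoprime.pow_left
      apply IsCoprime.prod_right
      intro μ hμ
      apply IsCoprime.pow_right
      have hne : a - μ ≠ 0 := sub_ne_zero.mpr (by rintro rfl; exact ha hμ)
      have h := Polynomial.isCoprime_X_sub_C_of_isUnit_sub (a := μ) (b := a)
        (isUnit_iff_ne_zero.mpr (fun h0 => hne (by linear_combination -h0)))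
      -- h : IsCoprime (X - C μ) (X - C a); we want IsCoprime (C a - X) (C μ - X)
      have := h.symm
      simpa using (this.neg_left.neg_right)
    rw [Finset.prod_insert ha, Finset.sum_insert ha, ← ih,
      ← Polynomial.sup_ker_aeval_eq_ker_aeval_mul_of_coprime f hcop]
    have hdisj := Polynomial.disjoint_ker_aeval_of_isCoprime f hcop
    have := Submodule.finrank_sup_add_finrank_inf_eq
      (ker (aeval f ((C a - X) ^ k))) (ker (aeval f (∏ μ ∈ s, (C μ - X) ^ k)))
    rw [disjoint_iff.mp hdisj] at this
    simpa using this

lemma mulVecLin_aeval {N : ℕ} (Φ : Matrix (Fin N) (Fin N) ℂ) (p : ℂ[X]) :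
    (Polynomial.aeval Φ p).mulVecLin = Polynomial.aeval Φ.mulVecLin p := by
  have h : ∀ M : Matrix (Fin N) (Fin N) ℂ, Matrix.toLinAlgEquiv' M = M.mulVecLin := by
    intro M; ext v i; simp [Matrix.toLinAlgEquiv'_apply, Matrix.mulVecLin_apply]
  have h2 := Polynomial.aeval_algHom_apply
    (Matrix.toLinAlgEquiv' (n := Fin N) (R := ℂ)).toAlgHom Φ p
  simp only [AlgEquiv.coe_toAlgHom] at h2
  rw [← h, ← h, h2]

lemma rank_aeval {N : ℕ} (Φ : Matrix (Fin N) (Fin N) ℂ) (p : ℂ[X]) :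
    ((Polynomial.aeval Φ p).rank : ℤ) =
      (N : ℤ) - Module.finrank ℂ (ker (aeval Φ.mulVecLin p)) := by
  have := LinearMap.finrank_range_add_finrank_ker (Polynomial.aeval Φ p).mulVecLin
  rw [Module.finrank_pi ℂ] at this
  simp only [Fintype.card_fin] at this
  have hr : (Polynomial.aeval Φ p).rank =
      Module.finrank ℂ (LinearMap.range (Polynomial.aeval Φ p).mulVecLin) := rfl
  rw [hr, mulVecLin_aeval] at *
  omega

/-- for `n ≥ 2` and `1 ≤ k ≤ n−1`,
`rank((Θ_Φ)^k) = n − n·m + Σⱼ rank((λⱼI − Φ)^k)` where `m` is the number of distinct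
eigenvalues of `Φ` (an identity of integers). -/
theorem stmt8 {n : ℕ} (hn : 2 ≤ n) (Φ : Matrix (Fin n) (Fin n) ℂ)
    (m : ℕ) (hm : (eigFinset Φ).card = m) :
    ∀ k : ℕ, 1 ≤ k → k ≤ n - 1 →
      (((thetaMat Φ) ^ k).rank : ℤ) =
        (n : ℤ) - (n : ℤ) * (m : ℤ) +
          ∑ μ ∈ eigFinset Φ,
            (((μ • (1 : Matrix (Fin n) (Fin n) ℂ) - Φ) ^ k).rank : ℤ) := by
  intro k _ _
  have hθ : (thetaMat Φ) ^ k = Polynomial.aeval Φ (∏ μ ∈ eigFinset Φ, (C μ - X) ^ k) := by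
    rw [thetaMat, ← map_pow, ← Finset.prod_pow]
  have hμ : ∀ μ : ℂ, (μ • (1 : Matrix (Fin n) (Fin n) ℂ) - Φ) ^ k =
      Polynomial.aeval Φ ((C μ - X) ^ k) := by
    intro μ
    rw [map_pow, map_sub, aeval_X, aeval_C, Algebra.algebraMap_eq_smul_one]
  rw [hθ, rank_aeval, ker_aeval_prod_finrank]
  have hsum : ∑ μ ∈ eigFinset Φ,
      (((μ • (1 : Matrix (Fin n) (Fin n) ℂ) - Φ) ^ k).rank : ℤ) =
      ∑ μ ∈ eigFinset Φ,
        ((n : ℤ) - Module.finrank ℂ (ker (aeval Φ.mulVecLin ((C μ - X) ^ k)))) := by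
    refine Finset.sum_congr rfl fun μ _ => ?_
    rw [hμ μ, rank_aeval]
  rw [hsum, Finset.sum_sub_distrib, Finset.sum_const, hm]
  push_cast
  ring
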